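/- Let Π be a CNF theory, M a model of Π, and S the steady set of M for Π. Then the set E = (M \ S) \ atom((simpl(Π,M))_{M\S}) of atoms of M \ S not occurring in the simplified theory is erasable in M for Π whenever it is nonempty; i.e., M \ E is a model of Π. -/
import Mathlib


structure Clause where
  head : Finset ℕ
  body : Finset ℕ
deriving DecidableEq

abbrev Theory := Finset Clause

/-- interpretation I satisfies clause c -/
def satC (I : Finset ℕ) (c : Clause) : Prop :=
  (c.head ∩ I).Nonempty ∨ ¬ c.body ⊆ I

def isModel (T : Theory) (I : Finset ℕ) : Prop := ∀ c ∈ T, satC I c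

def isMinModel (T : Theory) (I : Finset ℕ) : Prop :=
  isModel T I ∧ ∀ J ⊂ I, ¬ isModel T J

def Positive (T : Theory) : Prop := ∀ c ∈ T, c.head.Nonempty

def Horn (T : Theory) : Prop := ∀ c ∈ T, c.head.card = 1

/-- atoms occurring in a theory -/
def atoms (T : Theory) : Finset ℕ := T.biUnion (fun c => c.head ∪ c.body)

/-- c_{X←} : project head on X -/
def projHeadC (c : Clause) (X : Finset ℕ) : Clause := ⟨c.head ∩ X, c.body⟩
/-- c_X : project head and body on X -/
def projC (c : Clause) (X : Finset ℕ) : Clause := ⟨c.head ∩ X, c.body ∩ X⟩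

/-- Π_{X←} -/
def projHeadT (T : Theory) (X : Finset ℕ) : Theory :=
  (T.image (fun c => projHeadC c X)).filter (fun c => c.head.Nonempty)

/-- Π_X -/
def projT (T : Theory) (X : Finset ℕ) : Theory :=
  (T.image (fun c => projC c X)).filter (fun c => c.head.Nonempty)

/-- Π^{nd} : single-head fragment -/
def nd (T : Theory) : Theory := T.filter (fun c => c.head.card = 1)

/-- the steady set of M for Π is the minimal model of Π^{nd}_{M←} -/
def isSteady (T : Theory) (M S : Finset ℕ) : Prop :=
  isMinModel (nd (projHeadT T M)) S

def simpl (T : Theory) (M S : Finset ℕ) : Theory :=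
  T.filter (fun c => c.head ∩ S = ∅ ∧ c.body ⊆ M)

/-- simplified theory of Π w.r.t. M (with steady set S) -/
def simplT (T : Theory) (M S : Finset ℕ) : Theory := projT (simpl T M S) (M \ S)

/-- E erasable in M for T -/
def Erasable (T : Theory) (M E : Finset ℕ) : Prop :=
  E.Nonempty ∧ E ⊆ M ∧ isModel T (M \ E)

def Outbound (T : Theory) (Y Z : Finset ℕ) : Prop :=
  ∃ c ∈ T, (c.head ∩ Z).Nonempty ∧ (c.body ∩ (Y \ Z)).Nonempty ∧
    c.body ∩ Z = ∅ ∧ c.head ∩ (Y \ Z) = ∅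

def Elementary (T : Theory) (Y : Finset ℕ) : Prop :=
  Y.Nonempty ∧ Y ⊆ atoms T ∧ ∀ Z, Z ⊂ Y → Z.Nonempty → Outbound T Y Z

def HEF (T : Theory) : Prop :=
  ∀ c ∈ T, ∀ E, Elementary T E → (E ∩ c.head).card ≤ 1

def DisjunctiveSet (T : Theory) (S : Finset ℕ) : Prop :=
  ∃ c ∈ T, 1 < (c.head ∩ S).card

def SuperElementary (T : Theory) (X : Finset ℕ) : Prop :=
  Elementary T X ∧ ¬ Outbound T (atoms T) X

def posForm (T : Theory) (phi : ℕ) : Theory :=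
  T.filter (fun c => c.head.Nonempty) ∪
  (T.filter (fun c => c.head = ∅)).image (fun c => ⟨{phi}, c.body⟩) ∪
  (atoms T).image (fun a => ⟨{a}, {phi}⟩)

theorem stmt14 (T : Theory) (M S : Finset ℕ) (hM : isModel T M) (hS : isSteady T M S)
    (hSM : S ⊆ M)
    (hne : ((M \ S) \ atoms (simplT T M S)).Nonempty) :
    Erasable T M ((M \ S) \ atoms (simplT T M S)) := by
  refine ⟨hne, fun a ha => (Finset.mem_sdiff.1 (Finset.mem_sdiff.1 ha).1).1, ?_⟩
  intro c hc
  set E := (M \ S) \ atoms (simplT T M S) with hE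
  by_cases hb : c.body ⊆ M
  · by_cases hhs : (c.head ∩ S).Nonempty
    · left
      obtain ⟨a, haS⟩ := hhs
      rw [Finset.mem_inter] at haS
      refine ⟨a, Finset.mem_inter.2 ⟨haS.1, Finset.mem_sdiff.2 ⟨hSM haS.2, ?_⟩⟩⟩
      intro haE
      exact (Finset.mem_sdiff.1 (Finset.mem_sdiff.1 haE).1).2 haS.2
    · -- c ∈ simpl, head ∩ S = ∅
      have hS0 : c.head ∩ S = ∅ := Finset.not_nonempty_iff_eq_empty.1 hhs
      have hsimpl : c ∈ simpl T M S := by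
        simp [simpl, Finset.mem_filter, hc, hS0, hb]
      rcases hM c hc with hh | hbM
      · obtain ⟨a, haM⟩ := hh
        rw [Finset.mem_inter] at haM
        have haS : a ∉ S := fun h => by
          have : a ∈ c.head ∩ S := Finset.mem_inter.2 ⟨haM.1, h⟩
          simp [hS0] at this
        have haMS : a ∈ M \ S := Finset.mem_sdiff.2 ⟨haM.2, haS⟩
        -- projC c (M\S) ∈ simplT
        have hproj : projC c (M \ S) ∈ simplT T M S := by
          simp only [simplT, projT, Finset.mem_filter, Finset.mem_image]
          exact ⟨⟨c, hsimpl, rfl⟩, ⟨a, Finset.mem_inter.2 ⟨haM.1, haMS⟩⟩⟩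
        have hatom : a ∈ atoms (simplT T M S) := by
          simp only [atoms, Finset.mem_biUnion]
          exact ⟨projC c (M \ S), hproj, Finset.mem_union_left _
            (Finset.mem_inter.2 ⟨haM.1, haMS⟩)⟩
        left
        refine ⟨a, Finset.mem_inter.2 ⟨haM.1, Finset.mem_sdiff.2 ⟨haM.2, ?_⟩⟩⟩
        intro haE
        exact (Finset.mem_sdiff.1 haE).2 hatom
      · exact absurd hb hbM
  · right
    exact fun h => hb (h.trans (Finset.sdiff_subset))
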